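/- Let M be a k×(k+n) matrix over F_q whose first k columns form the identity and in which every k columns are linearly independent, and let G_i(n,k) be formed from i systematic columns and n−i parity columns of M. Then for every j ∈ [k], every recovery set R for e_j in G_i(n,k) other than a singleton consisting of a column equal to e_j has cardinality exactly k. Consequently every recovery set in G_i(n,k) has size either 1 or k. -/

import Mathlib

set_option maxHeartbeats 1000000

open Matrix


/-- `R ⊆ [n]` is a recovery set for object `j` under generator matrix `G`:
the standard basis vector `e_j` lies in the span of the columns of `G` indexed by `R`,
and minimally so. -/
def IsRecoverySet {F : Type*} [Field F] {k n : ℕ} (G : Matrix (Fin k) (Fin n) F)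
    (j : Fin k) (R : Finset (Fin n)) : Prop :=
  (Pi.single j 1 : Fin k → F) ∈ Submodule.span F (Gᵀ '' (R : Set (Fin n))) ∧
    ∀ S : Finset (Fin n), S ⊂ R →
      (Pi.single j 1 : Fin k → F) ∉ Submodule.span F (Gᵀ '' (S : Set (Fin n)))

/-- A valid allocation of request rates `lam` to recovery sets: nonnegative weights
`w j R` supported on recovery sets, summing to `lam j` for each object `j`, and
loading each server `l` by at most its unit capacity. -/
def IsValidAllocation {F : Type*} [Field F] {k n : ℕ} (G : Matrix (Fin k) (Fin n) F)
    (lam : Fin k → ℝ) (w : Fin k → Finset (Fin n) → ℝ) : Prop :=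
  (∀ j R, 0 ≤ w j R) ∧
  (∀ j R, ¬ IsRecoverySet G j R → w j R = 0) ∧
  (∀ j, ∑ R : Finset (Fin n), w j R = lam j) ∧
  (∀ l : Fin n, ∑ j : Fin k, ∑ R ∈ Finset.univ.filter (fun R : Finset (Fin n) => l ∈ R),
      w j R ≤ 1)

/-- The service rate region of `G`. -/
def ServiceRegion {F : Type*} [Field F] {k n : ℕ} (G : Matrix (Fin k) (Fin n) F) :
    Set (Fin k → ℝ) :=
  {lam | (∀ j, 0 ≤ lam j) ∧ ∃ w, IsValidAllocation G lam w}

/-- `Gmat M i` = the `k × n` matrix formed by the `i` leftmost (systematic) columns of `M`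
followed by the `n - i` rightmost (parity) columns of `M`. -/
def Gmat {F : Type*} [Field F] {k n : ℕ} (M : Matrix (Fin k) (Fin (k + n)) F) (i : ℕ) :
    Matrix (Fin k) (Fin n) F :=
  Matrix.of fun r l =>
    if (l : ℕ) < i then M r ⟨(l : ℕ), by have := l.isLt; omega⟩
    else M r ⟨k + (l : ℕ), by have := l.isLt; omega⟩



def embF {k n : ℕ} (i : ℕ) (l : Fin n) : Fin (k + n) :=
  if (l : ℕ) < i then ⟨(l : ℕ), by have := l.isLt; omega⟩
  else ⟨k + (l : ℕ), by have := l.isLt; omega⟩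

lemma embF_injective {k n : ℕ} (i : ℕ) (hik : i ≤ k) :
    Function.Injective (embF (k := k) (n := n) i) := by
  intro a b hab
  apply Fin.ext
  unfold embF at hab
  have hab' := congrArg Fin.val hab
  split_ifs at hab' <;> simp at hab' <;> omega

lemma li_of_card_le {F : Type*} [Field F] {k n : ℕ}
    (M : Matrix (Fin k) (Fin (k + n)) F)
    (hMDS : ∀ S : Finset (Fin (k + n)), S.card = k →
      LinearIndependent F (fun l : S => Mᵀ (l : Fin (k + n))))
    (S : Finset (Fin (k + n))) (hS : S.card ≤ k) :
    LinearIndependent F (fun l : S => Mᵀ (l : Fin (k + n))) := by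
  obtain ⟨T, hST, hT⟩ := Finset.exists_superset_card_eq hS (by rw [Fintype.card_fin]; omega)
  exact (hMDS T hT).comp (fun x => ⟨x.1, hST x.2⟩)
    (fun a b h => Subtype.ext (congrArg Subtype.val h : (a : Fin (k+n)) = b))

lemma Gmat_col {F : Type*} [Field F] {k n : ℕ} (M : Matrix (Fin k) (Fin (k + n)) F)
    (i : ℕ) (l : Fin n) : (Gmat M i)ᵀ l = Mᵀ (embF i l) := by
  funext r
  by_cases h : (l : ℕ) < i <;> simp [Gmat, embF, h]

theorem recovery_set_size_one_or_k
    {F : Type*} [Field F] [Fintype F] {k n : ℕ} (hk : 2 ≤ k) (hkn : k ≤ n)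
    (hq : k + n + 1 ≤ Fintype.card F)
    (M : Matrix (Fin k) (Fin (k + n)) F)
    (hsys : ∀ j : Fin k, ∀ r : Fin k, M r (Fin.castAdd n j) = if r = j then (1 : F) else 0)
    (hMDS : ∀ S : Finset (Fin (k + n)), S.card = k →
      LinearIndependent F (fun l : S => Mᵀ (l : Fin (k + n))))
    (i : ℕ) (hik : i ≤ k) (j : Fin k) (R : Finset (Fin n))
    (hR : IsRecoverySet (Gmat M i) j R) :
    ((¬ ∃ l : Fin n, R = {l} ∧ (Gmat M i)ᵀ l = (Pi.single j 1 : Fin k → F)) → R.card = k) ∧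
      (R.card = 1 ∨ R.card = k) := by
  obtain ⟨hmem, hmin⟩ := hR
  set e : Fin k → F := Pi.single j 1 with he
  have himg : ∀ (S : Finset (Fin n)),
      (Gmat M i)ᵀ '' (S : Set (Fin n)) = Mᵀ '' ((S.image (embF (k := k) i) : Finset _) : Set (Fin (k+n))) := by
    intro S
    rw [Finset.coe_image]
    ext v
    constructor
    · rintro ⟨l, hl, rfl⟩; exact ⟨embF i l, ⟨l, hl, rfl⟩, (Gmat_col M i l).symm⟩
    · rintro ⟨_, ⟨l, hl, rfl⟩, rfl⟩; exact ⟨l, hl, Gmat_col M i l⟩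
  -- Step A : R.card ≤ k
  have hRk : R.card ≤ k := by
    by_contra h
    push_neg at h
    obtain ⟨S, hSR, hScard⟩ := R.exists_subset_card_eq (le_of_lt h)
    refine hmin S ⟨hSR, fun hRS => by have := Finset.card_le_card hRS; omega⟩ ?_
    have himgcard : (S.image (embF (k := k) i)).card = k := by
      rw [Finset.card_image_of_injective _ (embF_injective i hik)]; exact hScard
    have hli := li_of_card_le M hMDS (S.image (embF (k := k) i)) himgcard.le
    have htop : Submodule.span F
        (Set.range (fun l : (S.image (embF (k := k) i) : Finset _) => Mᵀ (l : Fin (k+n)))) = ⊤ :=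
      hli.span_eq_top_of_card_eq_finrank'
        (by rw [Fintype.card_coe, himgcard, Module.finrank_fin_fun])
    have hrange : Set.range (fun l : (S.image (embF (k := k) i) : Finset _) => Mᵀ (l : Fin (k+n)))
        = (Gmat M i)ᵀ '' (S : Set (Fin n)) := by
      rw [himg S]
      ext v
      constructor
      · rintro ⟨⟨x, hx⟩, rfl⟩; exact ⟨x, hx, rfl⟩
      · rintro ⟨x, hx, rfl⟩; exact ⟨⟨x, hx⟩, rfl⟩
    rw [← hrange, htop]
    trivial
  -- singleton forcing
  have hsingle : ∀ l ∈ R, (Gmat M i)ᵀ l = e → R = {l} := by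
    intro l hl hcl
    by_contra hne
    refine hmin {l} ⟨Finset.singleton_subset_iff.2 hl, fun hsub => hne
      (Finset.Subset.antisymm hsub (Finset.singleton_subset_iff.2 hl))⟩ ?_
    rw [Finset.coe_singleton, Set.image_singleton (f := (Gmat M i)ᵀ), hcl]
    exact Submodule.mem_span_singleton_self _
  have h1 : (¬ ∃ l : Fin n, R = {l} ∧ (Gmat M i)ᵀ l = e) → R.card = k := by
    intro hno
    have hnocol : ∀ l ∈ R, (Gmat M i)ᵀ l ≠ e := fun l hl hc => hno ⟨l, hsingle l hl hc, hc⟩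
    have hMj : Mᵀ (Fin.castAdd n j) = e := by
      funext r
      rw [transpose_apply, hsys j r, he]
      simp [Pi.single_apply]
    have hjnot : Fin.castAdd n j ∉ R.image (embF (k := k) i) := by
      intro hmem'
      obtain ⟨l, hl, hel⟩ := Finset.mem_image.mp hmem'
      exact hnocol l hl (by rw [Gmat_col, hel, hMj])
    have hge : k ≤ R.card := by
      by_contra hlt
      push_neg at hlt
      set T : Finset (Fin (k+n)) := insert (Fin.castAdd n j) (R.image (embF (k := k) i)) with hT
      have hTcard : T.card ≤ k := by
        have h2 := Finset.card_insert_le (Fin.castAdd n j) (R.image (embF (k := k) i))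
        have h3 := Finset.card_image_le (f := embF (k := k) (n := n) i) (s := R)
        rw [hT]
        omega
      have hli := li_of_card_le M hMDS T hTcard
      have hx : (⟨Fin.castAdd n j, Finset.mem_insert_self _ _⟩ : T) ∉
          ({x : T | (x : Fin (k+n)) ∈ R.image (embF (k := k) i)} : Set T) := fun hx => hjnot hx
      refine hli.notMem_span_image hx ?_
      have himgs : (fun x : T => Mᵀ (x : Fin (k+n))) ''
          {x : T | (x : Fin (k+n)) ∈ R.image (embF (k := k) i)}
          = Mᵀ '' ((R.image (embF (k := k) i) : Finset _) : Set (Fin (k+n))) := by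
        ext v
        constructor
        · rintro ⟨⟨x, hxT⟩, hxs, rfl⟩; exact ⟨x, hxs, rfl⟩
        · rintro ⟨x, hx2, rfl⟩; exact ⟨⟨x, Finset.mem_insert_of_mem hx2⟩, hx2, rfl⟩
      show Mᵀ (Fin.castAdd n j) ∈ _
      rw [hMj, himgs, ← himg R]
      exact hmem
    omega
  refine ⟨h1, ?_⟩
  by_cases hcase : ∃ l : Fin n, R = {l} ∧ (Gmat M i)ᵀ l = e
  · obtain ⟨l, rfl, -⟩ := hcase
    left; simp
  · right; exact h1 hcase
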